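/- Let v1, v2 and T be jointly distributed random variables taking values in finite nonempty sets and let z1 = f(v1) for a deterministic (measurable) function f be a sufficient representation, i.e. I(z1;v2) = I(v1;v2). Then the Bayes error rate Pe := 1 − E_{z1}[max_t P(T = t | z1)] satisfies Pe ≤ 1 − exp(−(H(T) − I(z1;T|v2) − (I(v1;v2) − I(v1;v2|T)))). -/

import Mathlib

open scoped BigOperators

/-- Probability that the random variable `X` (on a finite sample space `Ω`
with probability mass function `p`) takes the value `x`. -/
noncomputable def pr {Ω S : Type*} [Fintype Ω] [DecidableEq S]
    (p : Ω → ℝ) (X : Ω → S) (x : S) : ℝ :=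
  ∑ ω, if X ω = x then p ω else 0

/-- Shannon entropy (natural logarithm) of a random variable `X`. -/
noncomputable def entropy {Ω S : Type*} [Fintype Ω] [Fintype S] [DecidableEq S]
    (p : Ω → ℝ) (X : Ω → S) : ℝ :=
  -∑ x, pr p X x * Real.log (pr p X x)

/-- Conditional Shannon entropy `H(X | Y)`. -/
noncomputable def condEntropy {Ω S U : Type*} [Fintype Ω] [Fintype S] [DecidableEq S]
    [Fintype U] [DecidableEq U] (p : Ω → ℝ) (X : Ω → S) (Y : Ω → U) : ℝ :=
  entropy p (fun ω => (X ω, Y ω)) - entropy p Y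

/-- Mutual information `I(X; Y)`. -/
noncomputable def mi {Ω S U : Type*} [Fintype Ω] [Fintype S] [DecidableEq S]
    [Fintype U] [DecidableEq U] (p : Ω → ℝ) (X : Ω → S) (Y : Ω → U) : ℝ :=
  entropy p X + entropy p Y - entropy p (fun ω => (X ω, Y ω))

/-- Conditional mutual information `I(X; Y | Z)`. -/
noncomputable def cmi {Ω S U W : Type*} [Fintype Ω] [Fintype S] [DecidableEq S]
    [Fintype U] [DecidableEq U] [Fintype W] [DecidableEq W]
    (p : Ω → ℝ) (X : Ω → S) (Y : Ω → U) (Z : Ω → W) : ℝ :=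
  mi p X (fun ω => (Y ω, Z ω)) - mi p X Z

/-- Conditional probability `P(X = x | Y = y)` (with junk value `0` when
`P(Y = y) = 0`, via real division). -/
noncomputable def condProb {Ω S U : Type*} [Fintype Ω] [DecidableEq S] [DecidableEq U]
    (p : Ω → ℝ) (X : Ω → S) (Y : Ω → U) (x : S) (y : U) : ℝ :=
  pr p (fun ω => (X ω, Y ω)) (x, y) / pr p Y y

/-- Bayes error rate `Pe = 1 − E_{p(z)}[max_t P(T = t | z)]`, the lowest
achievable error of any classifier predicting `T` from `Z`. -/
noncomputable def bayesError {Ω A B : Type*} [Fintype Ω]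
    [Fintype A] [DecidableEq A] [Nonempty A] [Fintype B] [DecidableEq B]
    (p : Ω → ℝ) (T : Ω → A) (Z : Ω → B) : ℝ :=
  1 - ∑ z, pr p Z z * ⨆ t, condProb p T Z t z

section Aux
variable {Ω : Type*} [Fintype Ω]

lemma pr_nonneg {S : Type*} [DecidableEq S] {p : Ω → ℝ} (hp : ∀ ω, 0 ≤ p ω)
    (X : Ω → S) (x : S) : 0 ≤ pr p X x :=
  Finset.sum_nonneg fun ω _ => by by_cases h : X ω = x <;> simp [h, hp ω]

lemma sum_pr {S : Type*} [Fintype S] [DecidableEq S] {p : Ω → ℝ} (hp1 : ∑ ω, p ω = 1)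
    (X : Ω → S) : ∑ x, pr p X x = 1 := by
  unfold pr; rw [Finset.sum_comm]; simpa using hp1

lemma pr_le_pr {S U : Type*} [DecidableEq S] [DecidableEq U] {p : Ω → ℝ} (hp : ∀ ω, 0 ≤ p ω)
    {X : Ω → S} {Y : Ω → U} {x : S} {y : U}
    (h : ∀ ω, X ω = x → Y ω = y) : pr p X x ≤ pr p Y y := by
  refine Finset.sum_le_sum fun ω _ => ?_
  by_cases hx : X ω = x
  · rw [if_pos hx, if_pos (h ω hx)]
  · rw [if_neg hx]; split <;> simp [hp ω]

lemma sum_pr_pair_left {S U : Type*} [Fintype S] [DecidableEq S] [DecidableEq U]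
    (p : Ω → ℝ) (X : Ω → S) (Y : Ω → U) (y : U) :
    ∑ x, pr p (fun ω => (X ω, Y ω)) (x, y) = pr p Y y := by
  unfold pr; rw [Finset.sum_comm]
  refine Finset.sum_congr rfl fun ω _ => ?_
  by_cases h : Y ω = y <;> simp [Prod.ext_iff, h]

lemma sum_pr_triple_mid {S U W : Type*} [Fintype U] [DecidableEq S] [DecidableEq U] [DecidableEq W]
    (p : Ω → ℝ) (X : Ω → S) (Y : Ω → U) (Z : Ω → W) (x : S) (w : W) :
    ∑ y, pr p (fun ω => (X ω, (Y ω, Z ω))) (x, (y, w)) = pr p (fun ω => (X ω, Z ω)) (x, w) := by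
  unfold pr; rw [Finset.sum_comm]
  refine Finset.sum_congr rfl fun ω _ => ?_
  by_cases hx : X ω = x <;> by_cases hz : Z ω = w <;> simp [Prod.ext_iff, hx, hz]

lemma pr_comp_inj {S U : Type*} [DecidableEq S] [DecidableEq U]
    (p : Ω → ℝ) (X : Ω → S) {e : S → U} (he : Function.Injective e) (x : S) :
    pr p (fun ω => e (X ω)) (e x) = pr p X x :=
  Finset.sum_congr rfl fun ω _ => by simp [he.eq_iff]

lemma pr_comp_not_mem {S U : Type*} [DecidableEq S] [DecidableEq U]
    (p : Ω → ℝ) (X : Ω → S) (e : S → U) (y : U) (hy : ∀ x, e x ≠ y) :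
    pr p (fun ω => e (X ω)) y = 0 :=
  Finset.sum_eq_zero fun ω _ => if_neg (hy (X ω))

lemma entropy_comp_inj {S U : Type*} [Fintype S] [DecidableEq S] [Fintype U] [DecidableEq U]
    (p : Ω → ℝ) (X : Ω → S) (e : S → U) (he : Function.Injective e) :
    entropy p (fun ω => e (X ω)) = entropy p X := by
  unfold entropy
  congr 1
  rw [← Finset.sum_subset (Finset.subset_univ ((Finset.univ : Finset S).image e))]
  · rw [Finset.sum_image (fun a _ b _ h => he h)]
    exact Finset.sum_congr rfl fun x _ => by rw [pr_comp_inj p X he]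
  · intro y _ hy
    have h0 : pr p (fun ω => e (X ω)) y = 0 :=
      pr_comp_not_mem p X e y fun x hx => hy (Finset.mem_image.2 ⟨x, Finset.mem_univ x, hx⟩)
    simp [h0]

end Aux

section CMI
variable {Ω S U W : Type*} [Fintype Ω] [Fintype S] [DecidableEq S]
  [Fintype U] [DecidableEq U] [Fintype W] [DecidableEq W]
  {p : Ω → ℝ}

lemma cmi_nonneg (hp : ∀ ω, 0 ≤ p ω) (hp1 : ∑ ω, p ω = 1)
    (X : Ω → S) (Y : Ω → U) (Z : Ω → W) : 0 ≤ cmi p X Y Z := by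
  set q : S → U → W → ℝ := fun x y z => pr p (fun ω => (X ω, (Y ω, Z ω))) (x, (y, z)) with hq
  set a : S → W → ℝ := fun x z => pr p (fun ω => (X ω, Z ω)) (x, z) with ha
  set b : U → W → ℝ := fun y z => pr p (fun ω => (Y ω, Z ω)) (y, z) with hb
  set c : W → ℝ := fun z => pr p Z z with hc
  have mXq : ∀ y z, ∑ x, q x y z = b y z := fun y z =>
    sum_pr_pair_left p X (fun ω => (Y ω, Z ω)) (y, z)
  have mYq : ∀ x z, ∑ y, q x y z = a x z := fun x z =>
    sum_pr_triple_mid p X Y Z x z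
  have mXa : ∀ z, ∑ x, a x z = c z := fun z => sum_pr_pair_left p X Z z
  have mYb : ∀ z, ∑ y, b y z = c z := fun z => sum_pr_pair_left p Y Z z
  have hcsum : ∑ z, c z = 1 := sum_pr hp1 Z
  have hq0 : ∀ x y z, 0 ≤ q x y z := fun x y z => pr_nonneg hp _ _
  have ha0 : ∀ x z, 0 ≤ a x z := fun x z => pr_nonneg hp _ _
  have hb0 : ∀ y z, 0 ≤ b y z := fun y z => pr_nonneg hp _ _
  have hc0 : ∀ z, 0 ≤ c z := fun z => pr_nonneg hp _ _
  have hqa : ∀ x y z, q x y z ≤ a x z := fun x y z =>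
    pr_le_pr hp (fun ω h => by simp [Prod.ext_iff] at h ⊢; tauto)
  have hqb : ∀ x y z, q x y z ≤ b y z := fun x y z =>
    pr_le_pr hp (fun ω h => by simp [Prod.ext_iff] at h ⊢; tauto)
  have hqc : ∀ x y z, q x y z ≤ c z := fun x y z =>
    pr_le_pr hp (fun ω h => by simp [Prod.ext_iff] at h ⊢; tauto)
  have pushB : ∀ g : U → W → ℝ,
      ∑ x, ∑ y, ∑ z, q x y z * g y z = ∑ y, ∑ z, b y z * g y z := by
    intro g
    rw [Finset.sum_comm]
    refine Finset.sum_congr rfl fun y _ => ?_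
    rw [Finset.sum_comm]
    refine Finset.sum_congr rfl fun z _ => ?_
    rw [← Finset.sum_mul, mXq]
  have pushA : ∀ g : S → W → ℝ,
      ∑ x, ∑ y, ∑ z, q x y z * g x z = ∑ x, ∑ z, a x z * g x z := by
    intro g
    refine Finset.sum_congr rfl fun x _ => ?_
    rw [Finset.sum_comm]
    refine Finset.sum_congr rfl fun z _ => ?_
    rw [← Finset.sum_mul, mYq]
  have pushC : ∀ g : W → ℝ,
      ∑ x, ∑ y, ∑ z, q x y z * g z = ∑ z, c z * g z := by
    intro g
    rw [pushB fun _ z => g z]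
    rw [Finset.sum_comm]
    refine Finset.sum_congr rfl fun z _ => ?_
    rw [← Finset.sum_mul, mYb]
  have eXYZ : entropy p (fun ω => (X ω, (Y ω, Z ω))) =
      -∑ x, ∑ y, ∑ z, q x y z * Real.log (q x y z) := by
    simp only [entropy, Fintype.sum_prod_type, hq]
  have eYZ : entropy p (fun ω => (Y ω, Z ω)) =
      -∑ x, ∑ y, ∑ z, q x y z * Real.log (b y z) := by
    rw [pushB fun y z => Real.log (b y z)]
    simp only [entropy, Fintype.sum_prod_type, hb]
  have eXZ : entropy p (fun ω => (X ω, Z ω)) =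
      -∑ x, ∑ y, ∑ z, q x y z * Real.log (a x z) := by
    rw [pushA fun x z => Real.log (a x z)]
    simp only [entropy, Fintype.sum_prod_type, ha]
  have eZ : entropy p Z = -∑ x, ∑ y, ∑ z, q x y z * Real.log (c z) := by
    rw [pushC fun z => Real.log (c z)]
    simp only [entropy, hc]
  have hq1 : ∑ x, ∑ y, ∑ z, q x y z = 1 := by
    have := pushC fun _ => (1 : ℝ)
    simpa [hcsum] using this
  have key : ∑ x, ∑ y, ∑ z,
      q x y z * (Real.log (a x z) + Real.log (b y z) - Real.log (q x y z) - Real.log (c z))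
      ≤ 0 := by
    have step1 : ∑ x, ∑ y, ∑ z,
        q x y z * (Real.log (a x z) + Real.log (b y z) - Real.log (q x y z) - Real.log (c z))
        ≤ ∑ x, ∑ y, ∑ z, (a x z * b y z / c z - q x y z) := by
      refine Finset.sum_le_sum fun x _ => Finset.sum_le_sum fun y _ => Finset.sum_le_sum fun z _ => ?_
      rcases eq_or_lt_of_le (hq0 x y z) with h | h
      · rw [← h]
        have : 0 ≤ a x z * b y z / c z :=
          div_nonneg (mul_nonneg (ha0 x z) (hb0 y z)) (hc0 z)
        simpa using this
      · have haq : 0 < a x z := lt_of_lt_of_le h (hqa x y z)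
        have hbq : 0 < b y z := lt_of_lt_of_le h (hqb x y z)
        have hcq : 0 < c z := lt_of_lt_of_le h (hqc x y z)
        have hlog : Real.log (a x z) + Real.log (b y z) - Real.log (q x y z) - Real.log (c z)
            = Real.log (a x z * b y z / (q x y z * c z)) := by
          rw [Real.log_div (by positivity) (by positivity),
            Real.log_mul (ne_of_gt haq) (ne_of_gt hbq),
            Real.log_mul (ne_of_gt h) (ne_of_gt hcq)]
          ring
        rw [hlog]
        have hle := Real.log_le_sub_one_of_pos
          (show 0 < a x z * b y z / (q x y z * c z) by positivity)
        have hid : q x y z * (a x z * b y z / (q x y z * c z)) = a x z * b y z / c z := by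
          field_simp
        nlinarith [hle, h]
    have step2 : ∑ x, ∑ y, ∑ z, (a x z * b y z / c z - q x y z)
        = (∑ x, ∑ y, ∑ z, a x z * b y z / c z) - 1 := by
      simp only [Finset.sum_sub_distrib]
      rw [hq1]
    have step3 : ∑ x, ∑ y, ∑ z, a x z * b y z / c z ≤ 1 := by
      have reorder : ∑ x, ∑ y, ∑ z, a x z * b y z / c z
          = ∑ z, ∑ x, ∑ y, a x z * b y z / c z := by
        rw [show (∑ x, ∑ y, ∑ z, a x z * b y z / c z)
            = ∑ x, ∑ z, ∑ y, a x z * b y z / c z from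
          Finset.sum_congr rfl fun x _ => Finset.sum_comm, Finset.sum_comm]
      rw [reorder, ← hcsum]
      refine Finset.sum_le_sum fun z _ => ?_
      by_cases hcz : c z = 0
      · simp [hcz, hc0 z]
      · refine le_of_eq ?_
        calc ∑ x, ∑ y, a x z * b y z / c z = ∑ x, a x z * c z / c z := by
              refine Finset.sum_congr rfl fun x _ => ?_
              rw [← Finset.sum_div, ← Finset.mul_sum, mYb]
          _ = ∑ x, a x z := by
              refine Finset.sum_congr rfl fun x _ => ?_
              field_simp
          _ = c z := mXa z
    linarith
  have expand : cmi p X Y Z = ∑ x, ∑ y, ∑ z,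
      q x y z * (Real.log (q x y z) + Real.log (c z) - Real.log (a x z) - Real.log (b y z)) := by
    simp only [cmi, mi, eXYZ, eYZ, eXZ, eZ, mul_add, mul_sub, Finset.sum_add_distrib,
      Finset.sum_sub_distrib]
    ring
  rw [expand]
  have hneg : ∑ x, ∑ y, ∑ z,
      q x y z * (Real.log (q x y z) + Real.log (c z) - Real.log (a x z) - Real.log (b y z))
      = -∑ x, ∑ y, ∑ z,
      q x y z * (Real.log (a x z) + Real.log (b y z) - Real.log (q x y z) - Real.log (c z)) := by
    simp only [← Finset.sum_neg_distrib]
    refine Finset.sum_congr rfl fun x _ => Finset.sum_congr rfl fun y _ =>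
      Finset.sum_congr rfl fun z _ => by ring
  rw [hneg]
  linarith [key]

end CMI

lemma exp_sub_entropy_le {Ω A B : Type*} [Fintype Ω]
    [Fintype A] [DecidableEq A] [Nonempty A] [Fintype B] [DecidableEq B]
    {p : Ω → ℝ} (hp : ∀ ω, 0 ≤ p ω) (hp1 : ∑ ω, p ω = 1)
    (T : Ω → A) (Z : Ω → B) :
    Real.exp (entropy p Z - entropy p (fun ω => (T ω, Z ω))) ≤
      ∑ z, pr p Z z * ⨆ t, condProb p T Z t z := by
  set c : B → ℝ := fun z => pr p Z z with hcdef
  set m : A → B → ℝ := fun t z => pr p (fun ω => (T ω, Z ω)) (t, z) with hmdef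
  set y : B → ℝ := fun z =>
    ((∑ t, m t z * Real.log (m t z)) - c z * Real.log (c z)) / c z with hydef
  have hc0 : ∀ z, 0 ≤ c z := fun z => pr_nonneg hp Z z
  have hm0 : ∀ t z, 0 ≤ m t z := fun t z => pr_nonneg hp _ _
  have hmc : ∀ t z, m t z ≤ c z := fun t z =>
    pr_le_pr hp (fun ω h => by simp [Prod.ext_iff] at h ⊢; tauto)
  have hcm : ∀ z, ∑ t, m t z = c z := fun z => sum_pr_pair_left p T Z z
  have hc1 : ∑ z, c z = 1 := sum_pr hp1 Z
  have hcy : ∀ z, c z * y z =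
      (∑ t, m t z * Real.log (m t z)) - c z * Real.log (c z) := by
    intro z
    by_cases hcz : c z = 0
    · have hm : ∀ t, m t z = 0 := fun t => le_antisymm (hcz ▸ hmc t z) (hm0 t z)
      simp [hydef, hcz, hm]
    · rw [hydef]
      field_simp
  have hsum : entropy p Z - entropy p (fun ω => (T ω, Z ω)) = ∑ z, c z * y z := by
    have e1 : entropy p (fun ω => (T ω, Z ω)) =
        -∑ z, ∑ t, m t z * Real.log (m t z) := by
      simp only [entropy, Fintype.sum_prod_type, hmdef]
      rw [Finset.sum_comm]
    rw [e1]
    simp only [entropy, hcy]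
    rw [Finset.sum_sub_distrib]
    ring
  rw [hsum]
  have jensen : Real.exp (∑ z, c z * y z) ≤ ∑ z, c z * Real.exp (y z) := by
    have := convexOn_exp.map_sum_le (t := Finset.univ) (w := c) (p := y)
      (fun z _ => hc0 z) hc1 (fun z _ => Set.mem_univ _)
    simpa [smul_eq_mul] using this
  refine jensen.trans (Finset.sum_le_sum fun z _ => ?_)
  by_cases hcz : c z = 0
  · have h0 : (0:ℝ) ≤ ⨆ t, condProb p T Z t z :=
      le_ciSup_of_le (Set.Finite.bddAbove (Set.finite_range _)) (Classical.arbitrary A)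
        (div_nonneg (pr_nonneg hp _ _) (pr_nonneg hp _ _))
    have hz0 : c z * Real.exp (y z) = 0 := by rw [hcz, zero_mul]
    rw [hz0]
    exact mul_nonneg (hc0 z) h0
  · have hc : 0 < c z := lt_of_le_of_ne (hc0 z) (Ne.symm hcz)
    obtain ⟨t0, ht0⟩ : ∃ t, 0 < m t z := by
      by_contra hno
      push_neg at hno
      have : c z = 0 := by
        rw [← hcm z]
        exact Finset.sum_eq_zero fun t _ => le_antisymm (hno t) (hm0 t z)
      exact hcz this
    have hbdd : BddAbove (Set.range fun t => condProb p T Z t z) :=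
      Set.Finite.bddAbove (Set.finite_range _)
    have hMt : ∀ t, m t z / c z ≤ ⨆ t, condProb p T Z t z := fun t =>
      le_ciSup hbdd t
    have hM0 : 0 < ⨆ t, condProb p T Z t z :=
      lt_of_lt_of_le (div_pos ht0 hc) (hMt t0)
    have hyM : y z ≤ Real.log (⨆ t, condProb p T Z t z) := by
      rw [hydef, div_le_iff₀ hc]
      have step : ∀ t, m t z * Real.log (m t z) - m t z * Real.log (c z) ≤
          m t z * Real.log (⨆ t, condProb p T Z t z) := by
        intro t
        rcases eq_or_lt_of_le (hm0 t z) with h | h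
        · simp [← h]
        · have : Real.log (m t z) - Real.log (c z) ≤
              Real.log (⨆ t, condProb p T Z t z) := by
            rw [← Real.log_div (ne_of_gt h) (ne_of_gt hc)]
            exact (Real.log_le_log_iff (div_pos h hc) hM0).2 (hMt t)
          nlinarith [this, h]
      calc (∑ t, m t z * Real.log (m t z)) - c z * Real.log (c z)
          = ∑ t, (m t z * Real.log (m t z) - m t z * Real.log (c z)) := by
            rw [Finset.sum_sub_distrib, ← Finset.sum_mul, hcm z]
        _ ≤ ∑ t, m t z * Real.log (⨆ t, condProb p T Z t z) :=
            Finset.sum_le_sum fun t _ => step t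
        _ = Real.log (⨆ t, condProb p T Z t z) * c z := by
            rw [← Finset.sum_mul, hcm z, mul_comm]
    have hexp : Real.exp (y z) ≤ ⨆ t, condProb p T Z t z := by
      calc Real.exp (y z) ≤ Real.exp (Real.log (⨆ t, condProb p T Z t z)) :=
            Real.exp_le_exp.2 hyM
        _ = _ := Real.exp_log hM0
    exact mul_le_mul_of_nonneg_left hexp (hc0 z)

/-- **Bayes error rate of a sufficient representation.** If `z1 = f ∘ v1` is
sufficient for `v2` (`I(z1; v2) = I(v1; v2)`), then its Bayes error rate for
predicting `T` satisfies
`Pe ≤ 1 − exp(−(H(T) − I(z1; T | v2) − (I(v1; v2) − I(v1; v2 | T))))`. -/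
theorem bayes_error_of_sufficient
    {Ω V1 V2 Z1 A : Type*} [Fintype Ω]
    [Fintype V1] [DecidableEq V1] [Nonempty V1]
    [Fintype V2] [DecidableEq V2] [Nonempty V2]
    [Fintype Z1] [DecidableEq Z1] [Nonempty Z1]
    [Fintype A] [DecidableEq A] [Nonempty A]
    (p : Ω → ℝ) (hp : ∀ ω, 0 ≤ p ω) (hp1 : ∑ ω, p ω = 1)
    (v1 : Ω → V1) (v2 : Ω → V2) (T : Ω → A) (f : V1 → Z1)
    (hsuf : mi p (fun ω => f (v1 ω)) v2 = mi p v1 v2) :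
    bayesError p T (fun ω => f (v1 ω)) ≤
      1 - Real.exp (-(entropy p T - cmi p (fun ω => f (v1 ω)) T v2 -
        (mi p v1 v2 - cmi p v1 v2 T))) := by
  classical
  set Z : Ω → Z1 := fun ω => f (v1 ω) with hZdef
  have E1 : entropy p (fun ω => (v1 ω, (Z ω, T ω))) = entropy p (fun ω => (v1 ω, T ω)) :=
    entropy_comp_inj p (fun ω => (v1 ω, T ω)) (fun q => (q.1, (f q.1, q.2)))
      (fun q r h => by simp only [Prod.ext_iff] at h ⊢; tauto)
  have E2 : entropy p (fun ω => (v2 ω, (v1 ω, (Z ω, T ω)))) =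
      entropy p (fun ω => (v1 ω, (v2 ω, T ω))) :=
    entropy_comp_inj p (fun ω => (v1 ω, (v2 ω, T ω)))
      (fun q => (q.2.1, (q.1, (f q.1, q.2.2))))
      (fun q r h => by simp only [Prod.ext_iff] at h ⊢; tauto)
  have E3 : entropy p (fun ω => (v2 ω, (Z ω, T ω))) =
      entropy p (fun ω => (Z ω, (v2 ω, T ω))) :=
    entropy_comp_inj p (fun ω => (Z ω, (v2 ω, T ω)))
      (fun q => (q.2.1, (q.1, q.2.2)))
      (fun q r h => by simp only [Prod.ext_iff] at h ⊢; tauto)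
  have E4 : entropy p (fun ω => (T ω, v2 ω)) = entropy p (fun ω => (v2 ω, T ω)) :=
    entropy_comp_inj p (fun ω => (v2 ω, T ω)) (fun q => (q.2, q.1))
      (fun q r h => by simp only [Prod.ext_iff] at h ⊢; tauto)
  have E5 : entropy p (fun ω => (Z ω, (T ω, v2 ω))) =
      entropy p (fun ω => (Z ω, (v2 ω, T ω))) :=
    entropy_comp_inj p (fun ω => (Z ω, (v2 ω, T ω)))
      (fun q => (q.1, (q.2.2, q.2.1)))
      (fun q r h => by simp only [Prod.ext_iff] at h ⊢; tauto)
  have E6 : entropy p (fun ω => (T ω, Z ω)) = entropy p (fun ω => (Z ω, T ω)) :=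
    entropy_comp_inj p (fun ω => (Z ω, T ω)) (fun q => (q.2, q.1))
      (fun q r h => by simp only [Prod.ext_iff] at h ⊢; tauto)
  have h0 : 0 ≤ cmi p v2 v1 (fun ω => (Z ω, T ω)) := cmi_nonneg hp hp1 _ _ _
  have hE : entropy p (fun ω => (T ω, Z ω)) - entropy p Z ≤
      entropy p T - cmi p Z T v2 - (mi p v1 v2 - cmi p v1 v2 T) := by
    simp only [cmi, mi] at h0 hsuf ⊢
    linarith [E1, E2, E3, E4, E5, E6]
  have hfano := exp_sub_entropy_le hp hp1 T Z
  have hexp : Real.exp (-(entropy p T - cmi p Z T v2 - (mi p v1 v2 - cmi p v1 v2 T)))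
      ≤ ∑ z, pr p Z z * ⨆ t, condProb p T Z t z :=
    le_trans (Real.exp_le_exp.2 (by linarith [hE])) hfano
  unfold bayesError
  linarith [hexp]
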